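/- In the 2-leader-action setting with follower utilities U_A(p) = (1−p)u_A + p·v_A, suppose no leader action strictly dominates and the equal-slope set is empty. Let μ be the unique minimizer of p ↦ max_A U_A(p). If the commitment interval satisfies underline{p} ≤ overline{p} < μ, then the follower's maximin best response set to [underline{p}, overline{p}] equals the set of ordinary best responses BR(overline{p}) to the precise mixture overline{p}. -/
import Mathlib


/-- Follower utilities `U_A(p) = (1−p)·uv A + p·vv A` for a two-action leader. -/
noncomputable def Uaff {F : Type} (uv vv : F → ℝ) (A : F) (p : ℝ) : ℝ :=
  (1 - p) * uv A + p * vv A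

/-- Worst-case value of follower mixture `q` against the commitment set `S ⊆ [0,1]`. -/
noncomputable def Wint {F : Type} [Fintype F] (uv vv : F → ℝ) (S : Set ℝ) (q : F → ℝ) : ℝ :=
  sInf ((fun p => ∑ A : F, q A * Uaff uv vv A p) '' S)

lemma Wint_singleton {F : Type} [Fintype F] (uv vv : F → ℝ) (p : ℝ) (q : F → ℝ) :
    Wint uv vv {p} q = ∑ A : F, q A * Uaff uv vv A p := by
  unfold Wint
  rw [Set.image_singleton, csInf_singleton]

lemma sum_aff {F : Type} [Fintype F] (uv vv : F → ℝ) (q : F → ℝ) (p : ℝ) :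
    ∑ A : F, q A * Uaff uv vv A p
      = (∑ A : F, q A * uv A) + p * ∑ A : F, q A * (vv A - uv A) := by
  rw [Finset.mul_sum, ← Finset.sum_add_distrib]
  apply Finset.sum_congr rfl
  intro A _
  simp only [Uaff]
  ring

lemma Wint_Icc {F : Type} [Fintype F] (uv vv : F → ℝ) (lo hi : ℝ) (hlh : lo ≤ hi)
    (q : F → ℝ) :
    Wint uv vv (Set.Icc lo hi) q
      = min (∑ A : F, q A * Uaff uv vv A lo) (∑ A : F, q A * Uaff uv vv A hi) := by
  set g : ℝ → ℝ := fun p => ∑ A : F, q A * Uaff uv vv A p with hg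
  set c : ℝ := ∑ A : F, q A * (vv A - uv A) with hc
  have hgp : ∀ p, g p = (∑ A : F, q A * uv A) + p * c := fun p => sum_aff uv vv q p
  have hbound : ∀ p ∈ Set.Icc lo hi, min (g lo) (g hi) ≤ g p := by
    intro p hp
    rcases le_or_gt 0 c with hcpos | hcneg
    · refine le_trans (min_le_left _ _) ?_
      rw [hgp lo, hgp p]
      nlinarith [hp.1]
    · refine le_trans (min_le_right _ _) ?_
      rw [hgp hi, hgp p]
      nlinarith [hp.2]
  have hlo : lo ∈ Set.Icc lo hi := ⟨le_refl _, hlh⟩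
  have hhi' : hi ∈ Set.Icc lo hi := ⟨hlh, le_refl _⟩
  have hbdd : BddBelow (g '' Set.Icc lo hi) := by
    refine ⟨min (g lo) (g hi), ?_⟩
    rintro x ⟨p, hp, rfl⟩
    exact hbound p hp
  unfold Wint
  apply le_antisymm
  · rcases le_total (g lo) (g hi) with h | h
    · rw [min_eq_left h]; exact csInf_le hbdd ⟨lo, hlo, rfl⟩
    · rw [min_eq_right h]; exact csInf_le hbdd ⟨hi, hhi', rfl⟩
  · refine le_csInf ⟨g lo, ⟨lo, hlo, rfl⟩⟩ ?_
    rintro x ⟨p, hp, rfl⟩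
    exact hbound p hp

/-- With no strictly dominating leader action, all slopes nonzero, and `μ` the unique
minimizer of `p ↦ max_A U_A(p)` on `[0,1]`: if the commitment interval lies strictly
below `μ`, then the follower's maximin best response set to the interval coincides with
the set of (maximin) best responses to the precise upper endpoint. -/
theorem stmt11 {F : Type} [Fintype F] [Nonempty F]
    (uv vv : F → ℝ) (hslope : ∀ A, uv A ≠ vv A)
    (hneg : ∃ A, vv A < uv A) (hpos : ∃ A, uv A < vv A)
    (μ : ℝ) (hμ : μ ∈ Set.Icc (0:ℝ) 1)
    (hmin : ∀ p ∈ Set.Icc (0:ℝ) 1, p ≠ μ →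
      sSup ((fun A => Uaff uv vv A μ) '' Set.univ) <
      sSup ((fun A => Uaff uv vv A p) '' Set.univ))
    (lo hi : ℝ) (h0 : 0 ≤ lo) (hlh : lo ≤ hi) (hhi : hi < μ) :
    {q | q ∈ stdSimplex ℝ F ∧
        ∀ q' ∈ stdSimplex ℝ F, Wint uv vv (Set.Icc lo hi) q' ≤ Wint uv vv (Set.Icc lo hi) q} =
    {q | q ∈ stdSimplex ℝ F ∧
        ∀ q' ∈ stdSimplex ℝ F, Wint uv vv {hi} q' ≤ Wint uv vv {hi} q} := by
  classical
  have hhi01 : hi ∈ Set.Icc (0:ℝ) 1 := ⟨le_trans h0 hlh, le_of_lt (lt_of_lt_of_le hhi hμ.2)⟩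
  -- the finite max at a point p
  set M : ℝ := sSup ((fun A => Uaff uv vv A hi) '' Set.univ) with hM
  have hfin : ((fun A => Uaff uv vv A hi) '' Set.univ).Finite :=
    Set.Finite.image _ Set.finite_univ
  have hne : ((fun A => Uaff uv vv A hi) '' Set.univ).Nonempty :=
    (Set.image_nonempty).2 Set.univ_nonempty
  have hMmem : M ∈ (fun A => Uaff uv vv A hi) '' Set.univ := hne.csSup_mem hfin
  obtain ⟨A₀, -, hA₀0⟩ := hMmem
  have hA₀ : Uaff uv vv A₀ hi = M := hA₀0
  have hMub : ∀ A, Uaff uv vv A hi ≤ M :=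
    fun A => le_csSup hfin.bddAbove ⟨A, Set.mem_univ A, rfl⟩
  -- every maximizer at hi has strictly negative slope
  have hdec : ∀ A, Uaff uv vv A hi = M → vv A < uv A := by
    intro A hAmax
    by_contra hle
    push_neg at hle
    have hlt : uv A < vv A := lt_of_le_of_ne hle (hslope A)
    have hUlt : Uaff uv vv A hi < Uaff uv vv A μ := by
      simp only [Uaff]; nlinarith
    have hMμ : sSup ((fun A => Uaff uv vv A μ) '' Set.univ) < M :=
      hmin hi hhi01 (ne_of_lt hhi)
    have hfinμ : ((fun A => Uaff uv vv A μ) '' Set.univ).Finite :=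
      Set.Finite.image _ Set.finite_univ
    have : Uaff uv vv A μ ≤ sSup ((fun A => Uaff uv vv A μ) '' Set.univ) :=
      le_csSup hfinμ.bddAbove ⟨A, Set.mem_univ A, rfl⟩
    rw [hAmax] at hUlt
    linarith
  -- the unit vector at A₀
  set δ : F → ℝ := fun A => if A = A₀ then 1 else 0 with hδ
  have hδsimp : δ ∈ stdSimplex ℝ F := by
    constructor
    · intro A; by_cases h : A = A₀ <;> simp [hδ, h]
    · simp [hδ]
  have hδsum : ∀ p, ∑ A : F, δ A * Uaff uv vv A p = Uaff uv vv A₀ p := by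
    intro p
    rw [Finset.sum_eq_single A₀]
    · simp [hδ]
    · intro b _ hb; simp [hδ, hb]
    · intro h; exact absurd (Finset.mem_univ A₀) h
  -- for q in the simplex, value at hi is ≤ M
  have hval_le : ∀ q ∈ stdSimplex ℝ F, ∑ A : F, q A * Uaff uv vv A hi ≤ M := by
    intro q hq
    calc ∑ A : F, q A * Uaff uv vv A hi ≤ ∑ A : F, q A * M := by
          apply Finset.sum_le_sum
          intro A _
          exact mul_le_mul_of_nonneg_left (hMub A) (hq.1 A)
      _ = M := by rw [← Finset.sum_mul, hq.2, one_mul]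
  -- if the value at hi equals M, then q is supported on maximizers, hence
  -- its utility is weakly decreasing: value at lo ≥ value at hi
  have hsupp : ∀ q ∈ stdSimplex ℝ F, ∑ A : F, q A * Uaff uv vv A hi = M →
      ∑ A : F, q A * Uaff uv vv A hi ≤ ∑ A : F, q A * Uaff uv vv A lo := by
    intro q hq hqM
    have hzero : ∑ A : F, q A * (M - Uaff uv vv A hi) = 0 := by
      have : ∑ A : F, q A * (M - Uaff uv vv A hi)
          = (∑ A : F, q A * M) - ∑ A : F, q A * Uaff uv vv A hi := by
        rw [← Finset.sum_sub_distrib]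
        apply Finset.sum_congr rfl
        intro A _; ring
      rw [this, ← Finset.sum_mul, hq.2, one_mul, hqM, sub_self]
    have hterm : ∀ A ∈ Finset.univ, q A * (M - Uaff uv vv A hi) = 0 := by
      rw [← Finset.sum_eq_zero_iff_of_nonneg]
      · exact hzero
      · intro A _
        exact mul_nonneg (hq.1 A) (sub_nonneg.2 (hMub A))
    apply Finset.sum_le_sum
    intro A _
    rcases (mul_eq_zero.1 (hterm A (Finset.mem_univ A))) with h | h
    · rw [h, zero_mul, zero_mul]
    · have hAmax : Uaff uv vv A hi = M := by linarith [sub_eq_zero.1 h]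
      have hAdec : vv A < uv A := hdec A hAmax
      apply mul_le_mul_of_nonneg_left _ (hq.1 A)
      simp only [Uaff]
      nlinarith
  -- δ achieves worst-case value M over the interval
  have hδIcc : Wint uv vv (Set.Icc lo hi) δ = M := by
    rw [Wint_Icc uv vv lo hi hlh, hδsum, hδsum, hA₀]
    rw [min_eq_right]
    rw [← hA₀]
    have := hsupp δ hδsimp (by rw [hδsum, hA₀])
    rw [hδsum, hδsum] at this
    exact this
  -- characterize both sets as {q ∈ simplex | value at hi = M}
  ext q
  simp only [Set.mem_setOf_eq]
  constructor
  · rintro ⟨hq, hopt⟩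
    refine ⟨hq, ?_⟩
    intro q' hq'
    rw [Wint_singleton, Wint_singleton]
    have h1 : M ≤ Wint uv vv (Set.Icc lo hi) q := by
      rw [← hδIcc]; exact hopt δ hδsimp
    rw [Wint_Icc uv vv lo hi hlh] at h1
    have h2 : M ≤ ∑ A : F, q A * Uaff uv vv A hi := le_trans h1 (min_le_right _ _)
    exact le_trans (hval_le q' hq') h2
  · rintro ⟨hq, hopt⟩
    refine ⟨hq, ?_⟩
    have hqM : ∑ A : F, q A * Uaff uv vv A hi = M := by
      apply le_antisymm (hval_le q hq)
      have := hopt δ hδsimp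
      rw [Wint_singleton, Wint_singleton, hδsum, hA₀] at this
      exact this
    intro q' hq'
    rw [Wint_Icc uv vv lo hi hlh q, Wint_Icc uv vv lo hi hlh q']
    have hqmin : min (∑ A : F, q A * Uaff uv vv A lo) (∑ A : F, q A * Uaff uv vv A hi) = M := by
      rw [min_eq_right (hqM ▸ hsupp q hq hqM), hqM]
    rw [hqmin]
    exact le_trans (min_le_right _ _) (hval_le q' hq')
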